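/- A ring R is P-symmetric if and only if the ring T_n(R) of n×n upper triangular matrices over R is P-symmetric, for every n ≥ 1. -/

import Mathlib

/-- A (two-sided) ideal `P` of a ring is prime if it is proper and for all `a b`,
`a R b ⊆ P` implies `a ∈ P` or `b ∈ P`. -/
def IsPrimeTwoSided {R : Type*} [Ring R] (P : TwoSidedIdeal R) : Prop :=
  P ≠ ⊤ ∧ ∀ a b : R, (∀ r : R, a * r * b ∈ P) → a ∈ P ∨ b ∈ P

/-- The prime radical `P(R)`: the intersection of all prime (two-sided) ideals of `R`. -/
def primeRadical (R : Type*) [Ring R] : Set R :=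
  {x | ∀ P : TwoSidedIdeal R, IsPrimeTwoSided P → x ∈ P}

/-- A ring `R` is `P`-symmetric if `a * b * c = 0` implies `b * a * c ∈ P(R)`. -/
def IsPSymmetric (R : Type*) [Ring R] : Prop :=
  ∀ a b c : R, a * b * c = 0 → b * a * c ∈ primeRadical R

/-- The ring `T_n(R)` of `n × n` upper triangular matrices over `R`, as a subring of the
matrix ring. -/
def upperTriangularSubring (n : ℕ) (R : Type*) [Ring R] :
    Subring (Matrix (Fin n) (Fin n) R) where
  carrier := {M | ∀ i j : Fin n, j < i → M i j = 0}
  zero_mem' := by intro i j _; simp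
  one_mem' := by intro i j h; exact Matrix.one_apply_ne (ne_of_gt h)
  add_mem' := by
    intro M N hM hN i j h
    simp [Matrix.add_apply, hM i j h, hN i j h]
  neg_mem' := by
    intro M hM i j h
    simp [Matrix.neg_apply, hM i j h]
  mul_mem' := by
    intro M N hM hN i j h
    simp only [Matrix.mul_apply]
    apply Finset.sum_eq_zero
    intro k _
    rcases lt_or_ge k i with hk | hk
    · rw [hM i k hk, zero_mul]
    · rw [hN k j (lt_of_lt_of_le h hk), mul_zero]

section Aux

open Matrix

variable {n : ℕ} {R : Type*} [Ring R]

local notation "S" => upperTriangularSubring n R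

lemma diag_mul (A B : S) (i : Fin n) : (A * B : S).1 i i = A.1 i i * B.1 i i := by
  show (A.1 * B.1) i i = _
  rw [Matrix.mul_apply, Finset.sum_eq_single i]
  · intro k _ hk
    rcases lt_or_gt_of_ne hk with h | h
    · rw [A.2 i k h, zero_mul]
    · rw [B.2 k i h, mul_zero]
  · intro h; exact absurd (Finset.mem_univ i) h

/-- The matrix with `d` at `(i,i)` and zero elsewhere, as an element of `T_n(R)`. -/
def stdDiag (d : R) (i : Fin n) : S :=
  ⟨Matrix.single i i d, by
    intro k j h
    apply Matrix.single_apply_of_ne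
    rintro ⟨h1, h2⟩
    exact absurd (h1 ▸ h2 ▸ h) (lt_irrefl _)⟩

@[simp] lemma stdDiag_apply_same (d : R) (i : Fin n) : (stdDiag d i).1 i i = d :=
  Matrix.single_apply_same i i d

lemma stdDiag_mul (a b : R) (i : Fin n) : stdDiag a i * stdDiag b i = stdDiag (a * b) i :=
  Subtype.ext (Matrix.single_mul_single_same a i i i b)

lemma stdDiag_mul_mul (a b : R) (i : Fin n) (M : S) :
    stdDiag a i * M * stdDiag b i = stdDiag (a * M.1 i i * b) i := by
  apply Subtype.ext
  show (Matrix.single i i a * M.1) * Matrix.single i i b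
    = Matrix.single i i (a * M.1 i i * b)
  ext k j
  rcases eq_or_ne j i with rfl | hj
  · rw [Matrix.mul_single_apply_same]
    rcases eq_or_ne k j with rfl | hk
    · rw [Matrix.single_mul_apply_same, Matrix.single_apply_same]
    · rw [Matrix.single_mul_apply_of_ne _ _ _ _ _ hk, zero_mul,
        Matrix.single_apply_of_ne]
      rintro ⟨rfl, -⟩; exact hk rfl
  · rw [Matrix.mul_single_apply_of_ne _ _ _ _ _ hj,
      Matrix.single_apply_of_ne]
    rintro ⟨-, rfl⟩; exact hj rfl

/-- `M` is `t`-strictly upper triangular. -/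
def Strict (t : ℕ) (M : S) : Prop := ∀ i j : Fin n, (j : ℕ) < (i : ℕ) + t → M.1 i j = 0

lemma strict_zero (M : S) : Strict 0 M := fun i j h => M.2 i j (Fin.lt_def.2 (by omega))

lemma strict_mono' {s t : ℕ} (h : s ≤ t) {M : S} (hM : Strict t M) : Strict s M :=
  fun i j hij => hM i j (by omega)

lemma strict_mul {s t : ℕ} {A B : S} (hA : Strict s A) (hB : Strict t B) :
    Strict (s + t) (A * B) := by
  intro i j hij
  show (A.1 * B.1) i j = 0
  rw [Matrix.mul_apply]
  apply Finset.sum_eq_zero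
  intro k _
  rcases lt_or_ge (k : ℕ) ((i : ℕ) + s) with hk | hk
  · rw [hA i k hk, zero_mul]
  · rw [hB k j (by omega), mul_zero]

lemma strict_n_eq_zero {M : S} (hM : Strict n M) : M = 0 := by
  apply Subtype.ext
  ext i j
  exact hM i j (by omega)

lemma mem_of_strict {Q : TwoSidedIdeal S} (hQ : IsPrimeTwoSided Q)
    {t : ℕ} (ht : 1 ≤ t) {M : S} (hM : Strict t M) : M ∈ Q := by
  obtain ⟨k, hk⟩ : ∃ k, n ≤ t + k := ⟨n, by omega⟩
  induction k generalizing t M with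
  | zero =>
    have : M = 0 := strict_n_eq_zero (strict_mono' (by omega) hM)
    rw [this]; exact Q.zero_mem
  | succ k ih =>
    refine (hQ.2 M M (fun s => ?_)).elim id id
    have h2 : Strict (t + 1) (M * s * M) := by
      have := strict_mul (strict_mul hM (strict_zero s)) hM
      exact strict_mono' (by omega) this
    exact ih (by omega) h2 (by omega)

/-- The pullback of a two-sided ideal `P` of `R` along the `i`-th diagonal entry map. -/
def diagComap (P : TwoSidedIdeal R) (i : Fin n) : TwoSidedIdeal S :=
  TwoSidedIdeal.mk' {M : S | M.1 i i ∈ P}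
    (by simp)
    (fun hx hy => by simpa using P.add_mem hx hy)
    (fun hx => by simpa using P.neg_mem hx)
    (fun {x y} hy => by simpa [diag_mul] using P.mul_mem_left _ _ hy)
    (fun {x y} hx => by simpa [diag_mul] using P.mul_mem_right _ _ hx)

lemma mem_diagComap {P : TwoSidedIdeal R} {i : Fin n} {M : S} :
    M ∈ diagComap P i ↔ M.1 i i ∈ P := TwoSidedIdeal.mem_mk' _ _ _ _ _ _ M

lemma diagComap_prime {P : TwoSidedIdeal R} (hP : IsPrimeTwoSided P) (i : Fin n) :
    IsPrimeTwoSided (diagComap P i) := by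
  constructor
  · intro h
    have : (1 : S) ∈ diagComap P i := h ▸ trivial
    rw [mem_diagComap] at this
    have h1 : ((1 : S)).1 i i = 1 := Matrix.one_apply_eq i
    rw [h1] at this
    exact hP.1 (P.eq_top this)
  · intro A B h
    refine (hP.2 (A.1 i i) (B.1 i i) (fun r => ?_)).imp mem_diagComap.2 mem_diagComap.2
    have := mem_diagComap.1 (h (stdDiag r i))
    rwa [diag_mul, diag_mul, stdDiag_apply_same] at this

lemma stdDiag_mem_prime {Q : TwoSidedIdeal S} (hQ : IsPrimeTwoSided Q)
    {d : R} (hd : d ∈ primeRadical R) (i : Fin n) : stdDiag d i ∈ Q := by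
  by_cases h1 : stdDiag 1 i ∈ Q
  · have := Q.mul_mem_left (stdDiag d i) _ h1
    rwa [stdDiag_mul, mul_one] at this
  · set P : TwoSidedIdeal R := TwoSidedIdeal.mk' {r : R | stdDiag r i ∈ Q}
      (by
        show stdDiag (0:R) i ∈ Q
        rw [show stdDiag (0:R) i = 0 from Subtype.ext (Matrix.single_zero i i)]
        exact Q.zero_mem)
      (fun {x y} hx hy => by
        have : stdDiag (x + y) i = stdDiag x i + stdDiag y i :=
          Subtype.ext (Matrix.single_add i i x y)
        simpa [Set.mem_setOf_eq, this] using Q.add_mem hx hy)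
      (fun {x} hx => by
        have : stdDiag (-x) i = -(stdDiag x i) := by
          apply Subtype.ext
          show Matrix.single i i (-x) = -(Matrix.single i i x)
          apply eq_neg_of_add_eq_zero_left
          rw [← Matrix.single_add, neg_add_cancel, Matrix.single_zero]
        simpa [Set.mem_setOf_eq, this] using Q.neg_mem hx)
      (fun {x y} hy => by
        have := Q.mul_mem_left (stdDiag x i) _ hy
        rwa [stdDiag_mul] at this)
      (fun {x y} hx => by
        have := Q.mul_mem_right _ (stdDiag y i) hx
        rwa [stdDiag_mul] at this) with hPdef
    have memP : ∀ r : R, r ∈ P ↔ stdDiag r i ∈ Q := fun r =>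
      TwoSidedIdeal.mem_mk' _ _ _ _ _ _ r
    have hPprime : IsPrimeTwoSided P := by
      constructor
      · intro h
        exact h1 ((memP 1).1 (h ▸ trivial))
      · intro a b hab
        refine (hQ.2 (stdDiag a i) (stdDiag b i) (fun s => ?_)).imp (memP a).2 (memP b).2
        rw [stdDiag_mul_mul]
        exact (memP _).1 (hab (s.1 i i))
    exact (memP d).1 (hd P hPprime)

/-- A triangular matrix whose diagonal entries all lie in `P(R)` is in `P(T_n(R))`. -/
lemma mem_primeRadical_of_diag {M : S} (hM : ∀ i : Fin n, M.1 i i ∈ primeRadical R) :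
    M ∈ primeRadical (S : Subring _) := by
  intro Q hQ
  set D : S := ∑ i : Fin n, stdDiag (M.1 i i) i with hD
  have hDmem : D ∈ Q := by
    apply sum_mem
    intro i _
    exact stdDiag_mem_prime hQ (hM i) i
  have hDentry : ∀ i j : Fin n, D.1 i j = if i = j then M.1 i i else 0 := by
    intro i j
    have hcoe : (D : Matrix (Fin n) (Fin n) R)
        = ∑ k : Fin n, Matrix.single k k (M.1 k k) := by
      rw [hD]
      exact map_sum (upperTriangularSubring n R).subtype
        (fun k => stdDiag (M.1 k k) k) Finset.univ
    rw [hcoe, Matrix.sum_apply]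
    rcases eq_or_ne i j with rfl | hne
    · rw [if_pos rfl, Finset.sum_eq_single i]
      · exact Matrix.single_apply_same i i _
      · intro k _ hk
        apply Matrix.single_apply_of_ne
        rintro ⟨rfl, -⟩; exact hk rfl
      · intro h; exact absurd (Finset.mem_univ i) h
    · rw [if_neg hne]
      apply Finset.sum_eq_zero
      intro k _
      apply Matrix.single_apply_of_ne
      rintro ⟨rfl, rfl⟩; exact hne rfl
  have hstrict : Strict 1 (M - D) := by
    intro i j hij
    show M.1 i j - D.1 i j = 0
    rcases eq_or_ne i j with rfl | hne
    · rw [hDentry i i, if_pos rfl, sub_self]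
    · have hlt : j < i := Fin.lt_def.2 (by omega)
      rw [hDentry i j, if_neg hne, M.2 i j hlt, sub_zero]
  have := Q.add_mem (mem_of_strict hQ (le_refl 1) hstrict) hDmem
  rwa [sub_add_cancel] at this
  
lemma diag_mem_primeRadical {M : S} (hM : M ∈ primeRadical (S : Subring _)) (i : Fin n) :
    M.1 i i ∈ primeRadical R := fun P hP =>
  mem_diagComap.1 (hM (diagComap P i) (diagComap_prime hP i))

end Aux

/-- `R` is `P`-symmetric if and only if `T_n(R)` is `P`-symmetric, for every `n ≥ 1`. -/
theorem isPSymmetric_iff_upperTriangular (R : Type*) [Ring R] :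
    ∀ n : ℕ, 1 ≤ n → (IsPSymmetric R ↔ IsPSymmetric (upperTriangularSubring n R)) := by
  intro n hn
  constructor
  · intro hR A B C habc
    apply mem_primeRadical_of_diag
    intro i
    have hdiag : A.1 i i * B.1 i i * C.1 i i = 0 := by
      rw [← diag_mul, ← diag_mul, habc]
      rfl
    have := hR _ _ _ hdiag
    rwa [← diag_mul, ← diag_mul] at this
  · intro hT a b c habc
    set i : Fin n := ⟨0, hn⟩
    have h0 : stdDiag a i * stdDiag b i * stdDiag c i = 0 := by
      rw [stdDiag_mul, stdDiag_mul, habc]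
      exact Subtype.ext (Matrix.single_zero i i)
    have := hT _ _ _ h0
    rw [stdDiag_mul, stdDiag_mul] at this
    have := diag_mem_primeRadical this i
    rwa [stdDiag_apply_same] at this
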